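/- For y ≥ 5 and θ = √(y² + 5π²/27), x = √(y² − 5π²/9), z = √(y² + 5π²/9): the quantity W₁ = √(θ⁹/(y⁶z³)) satisfies W₁ > 1 + 25π⁴/(324y⁴) − 250π⁶/(6561y⁶) + 38125π⁸/(1889568y⁸) − 34375π¹⁰/(3188646y¹⁰). -/

import Mathlib

lemma key_poly (t : ℝ) (h0 : 0 < t) (h1 : t ≤ 74/1000) :
    (1 + 9/4*t^2 - 6*t^3 + 549/32*t^4 - 99/2*t^5)^4 * (1+3*t)^3 < (1+t)^9 := by
  have ht1 : t ≤ 1 := by linarith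
  have h6p : 0 < t^6 := pow_pos h0 6
  have h7 : 0 ≤ t^7 := by positivity
  have h8 : 0 ≤ t^8 := by positivity
  have h9 : 0 ≤ t^9 := by positivity
  have h10 : 0 ≤ t^10 := by positivity
  have h11 : 0 ≤ t^11 := by positivity
  have h17 : 0 ≤ t^17 := by positivity
  have h18 : 0 ≤ t^18 := by positivity
  have h19 : 0 ≤ t^19 := by positivity
  have h20 : 0 ≤ t^20 := by positivity
  have h22 : 0 ≤ t^22 := by positivity
  have h6 : t^6 ≤ 165/1000000000 := by
    calc t^6 ≤ (74/1000)^6 := pow_le_pow_left₀ h0.le h1 6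
    _ ≤ 165/1000000000 := by norm_num
  have h12 : t^12 ≤ 165/1000000000 * t^6 := by
    calc t^12 = t^6 * t^6 := by ring
    _ ≤ 165/1000000000 * t^6 := mul_le_mul_of_nonneg_right h6 h6p.le
  have h13 : t^13 ≤ t^12 := pow_le_pow_of_le_one h0.le ht1 (by norm_num)
  have h14 : t^14 ≤ t^12 := pow_le_pow_of_le_one h0.le ht1 (by norm_num)
  have h15 : t^15 ≤ t^12 := pow_le_pow_of_le_one h0.le ht1 (by norm_num)
  have h16 : t^16 ≤ t^12 := pow_le_pow_of_le_one h0.le ht1 (by norm_num)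
  have h21 : t^21 ≤ t^12 := pow_le_pow_of_le_one h0.le ht1 (by norm_num)
  have h23 : t^23 ≤ t^12 := pow_le_pow_of_le_one h0.le ht1 (by norm_num)
  have hexp : (1+t)^9 - (1 + 9/4*t^2 - 6*t^3 + 549/32*t^4 - 99/2*t^5)^4 * (1+3*t)^3 =
      (18375/32) * t^6 + (111879/32) * t^7 + (4718727/512) * t^8 + (6797087/512) * t^9
      + (11636541/1024) * t^10 + (5404077/1024) * t^11 - (62337681/512) * t^12
      - (201855969/512) * t^13 - (18411625701/32768) * t^14 - (8928428229/32768) * t^15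
      - (232344402129/1048576) * t^16 + (395657109351/1048576) * t^17
      + (11369452621653/1048576) * t^18 + (6052163199957/1048576) * t^19
      + (191146842117/16384) * t^20 - (50650401681/2048) * t^21
      + (4008305169/64) * t^22 - (2593609227/16) * t^23 := by ring
  nlinarith [hexp, h6p, h7, h8, h9, h10, h11, h17, h18, h19, h20, h22, h12, h13, h14, h15, h16, h21, h23]

theorem stmt_16 (y : ℝ) (hy : 5 ≤ y) :
    1 + 25 * Real.pi ^ 4 / (324 * y ^ 4) - 250 * Real.pi ^ 6 / (6561 * y ^ 6)
        + 38125 * Real.pi ^ 8 / (1889568 * y ^ 8)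
        - 34375 * Real.pi ^ 10 / (3188646 * y ^ 10) <
      Real.sqrt ((Real.sqrt (y ^ 2 + 5 * Real.pi ^ 2 / 27)) ^ 9 /
        (y ^ 6 * (Real.sqrt (y ^ 2 + 5 * Real.pi ^ 2 / 9)) ^ 3)) := by
  have hy0 : (0:ℝ) < y := by linarith
  have hy2 : (0:ℝ) < y^2 := by positivity
  set t : ℝ := 5 * Real.pi ^ 2 / (27 * y ^ 2) with ht_def
  have hpi : Real.pi < 3.15 := Real.pi_lt_d2
  have hpi0 : 0 < Real.pi := Real.pi_pos
  have ht0 : 0 < t := by positivity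
  have ht1 : t ≤ 74/1000 := by
    rw [ht_def, div_le_iff₀ (by positivity)]
    have hp2 : Real.pi^2 ≤ 3.15^2 := by nlinarith
    have : (25:ℝ) ≤ y^2 := by nlinarith
    nlinarith
  have hs1 : Real.sqrt (y ^ 2 + 5 * Real.pi ^ 2 / 27) = y * Real.sqrt (1 + t) := by
    rw [show y ^ 2 + 5 * Real.pi ^ 2 / 27 = y^2 * (1 + t) by
      rw [ht_def]; field_simp]
    rw [Real.sqrt_mul (by positivity), Real.sqrt_sq hy0.le]
  have hs2 : Real.sqrt (y ^ 2 + 5 * Real.pi ^ 2 / 9) = y * Real.sqrt (1 + 3*t) := by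
    rw [show y ^ 2 + 5 * Real.pi ^ 2 / 9 = y^2 * (1 + 3*t) by
      rw [ht_def]; field_simp; ring]
    rw [Real.sqrt_mul (by positivity), Real.sqrt_sq hy0.le]
  have hA : (Real.sqrt (1+t))^2 = 1+t := Real.sq_sqrt (by linarith)
  have hB : (Real.sqrt (1+3*t))^2 = 1+3*t := Real.sq_sqrt (by linarith)
  have hBpos : 0 < Real.sqrt (1+3*t) := Real.sqrt_pos.mpr (by linarith)
  have hApos : 0 < Real.sqrt (1+t) := Real.sqrt_pos.mpr (by linarith)
  have hinner : (Real.sqrt (y ^ 2 + 5 * Real.pi ^ 2 / 27)) ^ 9 /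
      (y ^ 6 * (Real.sqrt (y ^ 2 + 5 * Real.pi ^ 2 / 9)) ^ 3)
      = (Real.sqrt (1+t))^9 / (Real.sqrt (1+3*t))^3 := by
    rw [hs1, hs2, mul_pow, mul_pow]
    rw [show y^6 * (y^3 * (Real.sqrt (1+3*t))^3) = y^9 * (Real.sqrt (1+3*t))^3 by ring]
    rw [mul_div_mul_left _ _ (by positivity)]
  rw [hinner]
  set W : ℝ := Real.sqrt ((Real.sqrt (1+t))^9 / (Real.sqrt (1+3*t))^3) with hW_def
  have hWnn : 0 ≤ W := Real.sqrt_nonneg _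
  have hW4 : W^4 = (1+t)^9 / (1+3*t)^3 := by
    have hRnn : 0 ≤ (Real.sqrt (1+t))^9 / (Real.sqrt (1+3*t))^3 := by positivity
    have : W^4 = ((Real.sqrt (1+t))^9 / (Real.sqrt (1+3*t))^3)^2 := by
      rw [hW_def, show (4:ℕ) = 2*2 by norm_num, pow_mul, Real.sq_sqrt hRnn]
    rw [this, div_pow, ← pow_mul, ← pow_mul]
    norm_num
    rw [show (18:ℕ) = 2*9 by norm_num, show (6:ℕ) = 2*3 by norm_num, pow_mul, pow_mul, hA, hB]
  have hL : 1 + 25 * Real.pi ^ 4 / (324 * y ^ 4) - 250 * Real.pi ^ 6 / (6561 * y ^ 6)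
        + 38125 * Real.pi ^ 8 / (1889568 * y ^ 8)
        - 34375 * Real.pi ^ 10 / (3188646 * y ^ 10)
      = 1 + 9/4*t^2 - 6*t^3 + 549/32*t^4 - 99/2*t^5 := by
    rw [ht_def]; field_simp; ring
  rw [hL]
  set g : ℝ := 1 + 9/4*t^2 - 6*t^3 + 549/32*t^4 - 99/2*t^5 with hg_def
  have hg0 : 0 < g := by rw [hg_def]; nlinarith [pow_pos ht0 2, pow_pos ht0 3, pow_pos ht0 4, pow_pos ht0 5]
  have hkey := key_poly t ht0 ht1
  have hg4 : g^4 < W^4 := by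
    rw [hW4, lt_div_iff₀ (by positivity)]
    exact hkey
  exact lt_of_pow_lt_pow_left₀ 4 hWnn hg4
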